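/- (Raw one-step expected-error bound for SGC with the ℓ2 loss, before choosing the step size.) For every β ∈ ℝ^ℓ and every step size γ > 0, the SGC update β⁺ satisfies E‖β⁺ − β*‖₂² ≤ ( ‖I − γXᵀX‖² + (p/((1−p)·n))·γ²·‖XᵀX‖² + (2p/((1−p)·σ))·γ²·‖XᵀX‖ )·‖β − β*‖₂² + (2p/((1−p)·σ))·γ²·‖r‖₂², where the expectation is over the straggler variables B_1,…,B_n. -/

import Mathlib

open MeasureTheory ProbabilityTheory Matrix Finset

/-- The spectral norm (ℓ2→ℓ2 operator norm) of a real matrix. -/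
noncomputable def specNorm {m l : ℕ} (M : Matrix (Fin m) (Fin l) ℝ) : ℝ :=
  ‖LinearMap.toContinuousLinearMap (Matrix.toEuclideanLin M)‖
lemma euclid_normsq {b : ℕ} (v : Fin b → ℝ) :
    ‖(WithLp.equiv 2 (Fin b → ℝ)).symm v‖ ^ 2 = ∑ k, v k ^ 2 := by
  rw [EuclideanSpace.norm_eq, Real.sq_sqrt (by positivity)]
  simp [sq_abs]

lemma specNorm_mulVec_sq_le {a b : ℕ} (M : Matrix (Fin a) (Fin b) ℝ) (v : Fin b → ℝ) :
    ∑ k, (M.mulVec v k) ^ 2 ≤ specNorm M ^ 2 * ∑ k, v k ^ 2 := by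
  set V : EuclideanSpace ℝ (Fin b) := (WithLp.equiv 2 (Fin b → ℝ)).symm v with hV
  have h1 : ‖(Matrix.toEuclideanLin M) V‖ ≤ specNorm M * ‖V‖ :=
    (LinearMap.toContinuousLinearMap (Matrix.toEuclideanLin M)).le_opNorm V
  have h2 : (Matrix.toEuclideanLin M) V = (WithLp.equiv 2 (Fin a → ℝ)).symm (M.mulVec v) := by
    rw [Matrix.toEuclideanLin_apply]
    simp [hV]
  have h3 : ‖(Matrix.toEuclideanLin M) V‖ ^ 2 ≤ (specNorm M * ‖V‖) ^ 2 := by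
    apply pow_le_pow_left₀ (norm_nonneg _) h1
  rw [h2, euclid_normsq] at h3
  calc ∑ k, (M.mulVec v k) ^ 2 ≤ (specNorm M * ‖V‖) ^ 2 := h3
    _ = specNorm M ^ 2 * ‖V‖ ^ 2 := by ring
    _ = specNorm M ^ 2 * ∑ k, v k ^ 2 := by rw [hV, euclid_normsq]

lemma specNorm_quad_le {b : ℕ} (M : Matrix (Fin b) (Fin b) ℝ) (v : Fin b → ℝ) :
    ∑ k, v k * (M.mulVec v) k ≤ specNorm M * ∑ k, v k ^ 2 := by
  set V : EuclideanSpace ℝ (Fin b) := (WithLp.equiv 2 (Fin b → ℝ)).symm v with hV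
  set W : EuclideanSpace ℝ (Fin b) := (WithLp.equiv 2 (Fin b → ℝ)).symm (M.mulVec v) with hW
  have h1 : ‖(Matrix.toEuclideanLin M) V‖ ≤ specNorm M * ‖V‖ :=
    (LinearMap.toContinuousLinearMap (Matrix.toEuclideanLin M)).le_opNorm V
  have h2 : (Matrix.toEuclideanLin M) V = W := by
    rw [Matrix.toEuclideanLin_apply]
    simp [hV, hW]
  have hinner : (inner ℝ V W : ℝ) = ∑ k, v k * (M.mulVec v) k := by
    rw [PiLp.inner_apply]
    simp [hV, hW, RCLike.inner_apply]
    exact Finset.sum_congr rfl fun k _ => mul_comm _ _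
  have hcs : (inner ℝ V W : ℝ) ≤ ‖V‖ * ‖W‖ := real_inner_le_norm V W
  have hop : ‖W‖ ≤ specNorm M * ‖V‖ := h2 ▸ h1
  have hfin : (inner ℝ V W : ℝ) ≤ specNorm M * ‖V‖ ^ 2 := by
    calc (inner ℝ V W : ℝ) ≤ ‖V‖ * ‖W‖ := hcs
      _ ≤ ‖V‖ * (specNorm M * ‖V‖) := mul_le_mul_of_nonneg_left hop (norm_nonneg _)
      _ = specNorm M * ‖V‖ ^ 2 := by ring
  rw [hinner, hV, euclid_normsq] at hfin
  exact hfin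

lemma sum_expand_sq {l n : ℕ} (e : Fin l → ℝ) (γ : ℝ) (b : Fin n → ℝ) (w : Fin n → Fin l → ℝ) :
    ∑ k, (e k - γ * ∑ j, b j * w j k) ^ 2
      = (∑ k, e k ^ 2) + (∑ j, ((-2 * γ) * ∑ k, e k * w j k) * b j)
        + ∑ j, ∑ j', ((γ ^ 2 * ∑ k, w j k * w j' k) * (b j * b j')) := by
  have hL : ∑ k, e k * ∑ j, b j * w j k = ∑ j, (∑ k, e k * w j k) * b j := by
    calc ∑ k, e k * ∑ j, b j * w j k
        = ∑ k, ∑ j, (e k * w j k) * b j := Finset.sum_congr rfl fun k _ => by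
          rw [Finset.mul_sum]; exact Finset.sum_congr rfl fun j _ => by ring
      _ = ∑ j, ∑ k, (e k * w j k) * b j := Finset.sum_comm
      _ = ∑ j, (∑ k, e k * w j k) * b j := Finset.sum_congr rfl fun j _ =>
          (Finset.sum_mul _ _ _).symm
  have hQ : ∑ k, (∑ j, b j * w j k) * (∑ j', b j' * w j' k)
      = ∑ j, ∑ j', (∑ k, w j k * w j' k) * (b j * b j') := by
    calc ∑ k, (∑ j, b j * w j k) * (∑ j', b j' * w j' k)
        = ∑ k, ∑ j, ∑ j', (w j k * w j' k) * (b j * b j') := Finset.sum_congr rfl fun k _ => by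
          rw [Finset.sum_mul_sum]
          exact Finset.sum_congr rfl fun j _ => Finset.sum_congr rfl fun j' _ => by ring
      _ = ∑ j, ∑ k, ∑ j', (w j k * w j' k) * (b j * b j') := Finset.sum_comm
      _ = ∑ j, ∑ j', ∑ k, (w j k * w j' k) * (b j * b j') :=
          Finset.sum_congr rfl fun j _ => Finset.sum_comm
      _ = ∑ j, ∑ j', (∑ k, w j k * w j' k) * (b j * b j') :=
          Finset.sum_congr rfl fun j _ => Finset.sum_congr rfl fun j' _ =>
            (Finset.sum_mul _ _ _).symm
  calc ∑ k, (e k - γ * ∑ j, b j * w j k) ^ 2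
      = ∑ k, (e k ^ 2 + (-2 * γ) * (e k * ∑ j, b j * w j k)
          + γ ^ 2 * ((∑ j, b j * w j k) * (∑ j', b j' * w j' k))) :=
        Finset.sum_congr rfl fun k _ => by ring
    _ = (∑ k, e k ^ 2) + ((-2 * γ) * ∑ k, e k * ∑ j, b j * w j k)
        + γ ^ 2 * ∑ k, (∑ j, b j * w j k) * (∑ j', b j' * w j' k) := by
        rw [Finset.sum_add_distrib, Finset.sum_add_distrib, Finset.mul_sum, Finset.mul_sum]
    _ = (∑ k, e k ^ 2) + (∑ j, ((-2 * γ) * ∑ k, e k * w j k) * b j)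
        + ∑ j, ∑ j', ((γ ^ 2 * ∑ k, w j k * w j' k) * (b j * b j')) := by
        rw [hL, hQ, Finset.mul_sum, Finset.mul_sum]
        congr 1
        · congr 1
          exact Finset.sum_congr rfl fun j _ => by ring
        · exact Finset.sum_congr rfl fun j _ => by
            rw [Finset.mul_sum]
            exact Finset.sum_congr rfl fun j' _ => by ring

lemma sum_workers {m n : ℕ} (S : Fin n → Finset (Fin m)) (g : Fin m → ℝ) :
    ∑ j, ∑ i ∈ S j, g i
      = ∑ i, ((Finset.univ.filter (fun j => i ∈ S j)).card : ℝ) * g i := by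
  have h1 : ∀ j, ∑ i ∈ S j, g i = ∑ i, if i ∈ S j then g i else 0 := fun j => by
    rw [Finset.sum_ite_mem, Finset.univ_inter]
  simp_rw [h1]
  rw [Finset.sum_comm]
  refine Finset.sum_congr rfl fun i _ => ?_
  rw [← Finset.sum_filter, Finset.sum_const, nsmul_eq_mul]

lemma sum_workers_pair {m n : ℕ} (S : Fin n → Finset (Fin m)) (F : Fin m → Fin m → ℝ) :
    ∑ j, ∑ i ∈ S j, ∑ i' ∈ S j, F i i'
      = ∑ i, ∑ i', ((Finset.univ.filter (fun j => i ∈ S j ∧ i' ∈ S j)).card : ℝ) * F i i' := by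
  have h1 : ∀ j, ∑ i ∈ S j, ∑ i' ∈ S j, F i i'
      = ∑ i, ∑ i', if i ∈ S j ∧ i' ∈ S j then F i i' else 0 := by
    intro j
    calc ∑ i ∈ S j, ∑ i' ∈ S j, F i i'
        = ∑ i ∈ S j, ∑ i', if i' ∈ S j then F i i' else 0 :=
          Finset.sum_congr rfl fun i _ => by rw [Finset.sum_ite_mem, Finset.univ_inter]
      _ = ∑ i, if i ∈ S j then (∑ i', if i' ∈ S j then F i i' else 0) else 0 := by
          rw [Finset.sum_ite_mem, Finset.univ_inter]
      _ = ∑ i, ∑ i', if i ∈ S j ∧ i' ∈ S j then F i i' else 0 :=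
          Finset.sum_congr rfl fun i _ => by
            by_cases h : i ∈ S j <;> simp [h]
  simp_rw [h1]
  rw [Finset.sum_comm]
  refine Finset.sum_congr rfl fun i _ => ?_
  rw [Finset.sum_comm]
  refine Finset.sum_congr rfl fun i' _ => ?_
  rw [← Finset.sum_filter, Finset.sum_const, nsmul_eq_mul]

lemma int01 {Ω : Type*} [MeasureSpace Ω] [IsProbabilityMeasure (ℙ : Measure Ω)]
    {f : Ω → ℝ} (hm : Measurable f) (h01 : ∀ ω, f ω = 0 ∨ f ω = 1) :
    Integrable f ℙ := by
  apply Integrable.mono' (integrable_const (1 : ℝ)) hm.aestronglyMeasurable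
  filter_upwards with ω
  rcases h01 ω with h | h <;> simp [h]

lemma int_eq01 {Ω : Type*} [MeasureSpace Ω] [IsProbabilityMeasure (ℙ : Measure Ω)]
    {f : Ω → ℝ} (hm : Measurable f) (h01 : ∀ ω, f ω = 0 ∨ f ω = 1)
    {q : ℝ} (hq : 0 ≤ q) (hp : (ℙ : Measure Ω) {ω | f ω = 1} = ENNReal.ofReal q) :
    ∫ ω, f ω = q := by
  have hs : MeasurableSet {ω | f ω = 1} := hm (measurableSet_singleton 1)
  have hf : f = Set.indicator {ω | f ω = 1} (fun _ => (1 : ℝ)) := funext fun ω => by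
    rcases h01 ω with h | h <;> simp [Set.indicator_apply, Set.mem_setOf_eq, h]
  rw [hf, MeasureTheory.integral_indicator_const _ hs, measureReal_def, hp, smul_eq_mul, mul_one,
    ENNReal.toReal_ofReal hq]

lemma sum_ip_regroup {m l : ℕ} (a : Fin m → Fin l → ℝ) :
    ∑ i, ∑ i', (∑ k, a i k * a i' k) = ∑ k, (∑ i, a i k) ^ 2 := by
  calc ∑ i, ∑ i', (∑ k, a i k * a i' k)
      = ∑ i, ∑ k, ∑ i', a i k * a i' k :=
        Finset.sum_congr rfl fun i _ => Finset.sum_comm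
    _ = ∑ k, ∑ i, ∑ i', a i k * a i' k := Finset.sum_comm
    _ = ∑ k, (∑ i, a i k) ^ 2 := Finset.sum_congr rfl fun k _ => by
        rw [sq, Finset.sum_mul_sum]

lemma mulVec_sq_eq {a b : ℕ} (X : Matrix (Fin a) (Fin b) ℝ) (v : Fin b → ℝ) :
    ∑ i, (X.mulVec v i) ^ 2 = ∑ k, v k * ((Xᵀ * X).mulVec v) k := by
  simp only [Matrix.mulVec, dotProduct, Matrix.mul_apply, Matrix.transpose_apply]
  calc ∑ i, (∑ k, X i k * v k) ^ 2
      = ∑ i, ∑ k, ∑ k', (X i k * v k) * (X i k' * v k') := Finset.sum_congr rfl fun i _ => by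
        rw [sq, Finset.sum_mul_sum]
    _ = ∑ k, ∑ i, ∑ k', (X i k * v k) * (X i k' * v k') := Finset.sum_comm
    _ = ∑ k, ∑ k', ∑ i, (X i k * v k) * (X i k' * v k') :=
        Finset.sum_congr rfl fun k _ => Finset.sum_comm
    _ = ∑ k, v k * ∑ k', (∑ i, X i k * X i k') * v k' := by
        refine Finset.sum_congr rfl fun k _ => ?_
        rw [Finset.mul_sum]
        refine Finset.sum_congr rfl fun k' _ => ?_
        rw [Finset.sum_mul, Finset.mul_sum]
        exact Finset.sum_congr rfl fun i _ => by ring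

lemma coeff_W (di q s : ℝ) (hdi : di ≠ 0) (hq : q ≠ 0) :
    q * (di * ((di * q)⁻¹ * s)) = s := by
  field_simp

lemma coeff_off (di di' np q s : ℝ) (hdi : di ≠ 0) (hdi' : di' ≠ 0)
    (hnp : np ≠ 0) (hq : q ≠ 0) :
    (di * di' / np) * (((di * q)⁻¹ * (di' * q)⁻¹) * s) = np⁻¹ * (q ^ 2)⁻¹ * s := by
  field_simp

lemma coeff_diag (di q s : ℝ) (hdi : di ≠ 0) (hq : q ≠ 0) :
    di * (((di * q)⁻¹ * (di * q)⁻¹) * s) = di⁻¹ * (q ^ 2)⁻¹ * s := by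
  field_simp

lemma cancel₁ (q v z : ℝ) (hq : q ≠ 0) : q * (v * q⁻¹ * z) = v * z := by
  field_simp

lemma h5aux (q pp g s : ℝ) (hq : q ≠ 0) : g ^ 2 * (pp * q) * s = pp * g ^ 2 * q⁻¹ * (q ^ 2 * s) := by
  field_simp

lemma cancel₃ (u sx s' : ℝ) (hsx : sx ≠ 0) (hs : s' ≠ 0) :
    u * sx * (s' * sx)⁻¹ = u / s' := by
  field_simp

lemma finalring (K1 K2 E2 R2 pp g q nn sg : ℝ) :
    K1 ^ 2 * E2 + pp * g ^ 2 * q⁻¹ * nn⁻¹ * (K2 ^ 2 * E2)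
      + pp * g ^ 2 * q⁻¹ * (2 / sg * (K2 * E2 + R2))
    = (K1 ^ 2 + pp / (q * nn) * g ^ 2 * K2 ^ 2 + 2 * pp / (q * sg) * g ^ 2 * K2) * E2
      + 2 * pp / (q * sg) * g ^ 2 * R2 := by
  rw [div_eq_mul_inv, div_eq_mul_inv, div_eq_mul_inv, mul_inv, mul_inv]
  ring

set_option maxHeartbeats 1000000 in
/-- **Raw one-step expected-error bound for SGC with the ℓ2 loss.**
`E‖β⁺ − β*‖₂² ≤ (‖I − γXᵀX‖² + (p/((1−p)n)) γ² ‖XᵀX‖² + (2p/((1−p)σ)) γ² ‖XᵀX‖) ‖β − β*‖₂²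
  + (2p/((1−p)σ)) γ² ‖r‖₂²`. -/
theorem sgc_one_step_raw_bound
    (m n l : ℕ) (hn : 1 ≤ n)
    (S : Fin n → Finset (Fin m)) (d : Fin m → ℕ) (hdpos : ∀ i, 0 < d i)
    (hdeg : ∀ i : Fin m, (Finset.univ.filter (fun j => i ∈ S j)).card = d i)
    (hpair : ∀ i i' : Fin m, i ≠ i' →
      (Finset.univ.filter (fun j => i ∈ S j ∧ i' ∈ S j)).card * n = d i * d i')
    (hdn : ∀ i, d i ≤ n)
    (p : ℝ) (hp0 : 0 ≤ p) (hp1 : p < 1)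
    (X : Matrix (Fin m) (Fin l) ℝ) (y : Fin m → ℝ) (βstar : Fin l → ℝ)
    (hnormal : Xᵀ.mulVec (X.mulVec βstar - y) = 0)
    (σ dbar : ℝ)
    (hdbar : dbar = (∑ i, (d i : ℝ)) / m)
    (hσ : σ = n * dbar / (∑ i, ∑ k, X i k ^ 2))
    (hw : ∀ i, (d i : ℝ) = σ * ∑ k, X i k ^ 2)
    (Ω : Type*) [MeasureSpace Ω] [IsProbabilityMeasure (ℙ : Measure Ω)]
    (B : Fin n → Ω → ℝ)
    (hB01 : ∀ j ω, B j ω = 0 ∨ B j ω = 1)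
    (hBmeas : ∀ j, Measurable (B j))
    (hBp : ∀ j, (ℙ : Measure Ω) {ω | B j ω = 1} = ENNReal.ofReal (1 - p))
    (hBindep : iIndepFun B ℙ)
    (Z : Fin m → Ω → ℝ)
    (hZ : ∀ i ω, Z i ω = ∑ j, if i ∈ S j then B j ω else 0)
    (γ : ℝ) (hγ : 0 < γ)
    (β : Fin l → ℝ) (βplus : Ω → Fin l → ℝ)
    (hβplus : ∀ ω, βplus ω = β - γ •
      ∑ i, (Z i ω / ((d i : ℝ) * (1 - p))) • (((X.mulVec β) i - y i) • (X i))) :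
    ∫ ω, ∑ k, (βplus ω k - βstar k) ^ 2 ≤
      (specNorm (1 - γ • (Xᵀ * X)) ^ 2
          + p / ((1 - p) * n) * γ ^ 2 * specNorm (Xᵀ * X) ^ 2
          + 2 * p / ((1 - p) * σ) * γ ^ 2 * specNorm (Xᵀ * X))
        * (∑ k, (β k - βstar k) ^ 2)
      + 2 * p / ((1 - p) * σ) * γ ^ 2 * ∑ i, (X.mulVec βstar - y) i ^ 2 := by
  have hp' : (0:ℝ) < 1 - p := by linarith
  have hpne : (1:ℝ) - p ≠ 0 := ne_of_gt hp'
  have hnR : (0:ℝ) < (n:ℝ) := by exact_mod_cast Nat.lt_of_lt_of_le Nat.zero_lt_one hn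
  have hnne : (n:ℝ) ≠ 0 := ne_of_gt hnR
  have hdR : ∀ i, (0:ℝ) < (d i : ℝ) := fun i => by exact_mod_cast hdpos i
  have hdne : ∀ i, (d i : ℝ) ≠ 0 := fun i => ne_of_gt (hdR i)
  -- abbreviations
  set K1 : ℝ := specNorm (1 - γ • (Xᵀ * X)) with hK1
  set K2 : ℝ := specNorm (Xᵀ * X) with hK2
  set E2 : ℝ := ∑ k, (β k - βstar k) ^ 2 with hE2
  set R2 : ℝ := ∑ i, (X.mulVec βstar - y) i ^ 2 with hR2
  set e : Fin l → ℝ := fun k => β k - βstar k with he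
  set r : Fin m → ℝ := fun i => (X.mulVec βstar - y) i with hrdef
  set t : Fin m → ℝ := fun i => X.mulVec β i - y i with htdef
  set c : Fin m → ℝ := fun i => ((d i : ℝ) * (1 - p))⁻¹ with hcdef
  set a : Fin m → Fin l → ℝ := fun i k => t i * X i k with hadef
  set w : Fin n → Fin l → ℝ := fun j k => ∑ i ∈ S j, c i * a i k with hwdef
  set A : Fin l → ℝ := fun k => ((Xᵀ * X).mulVec e) k with hAdef
  have hE2e : E2 = ∑ k, e k ^ 2 := rfl
  have hR2e : R2 = ∑ i, r i ^ 2 := rfl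
  -- residual decomposition
  have hres : ∀ i, t i = X.mulVec e i + r i := fun i => by
    show X.mulVec β i - y i = X.mulVec (β - βstar) i + (X.mulVec βstar - y) i
    rw [Matrix.mulVec_sub]
    simp only [Pi.sub_apply]
    ring
  have hXt : Xᵀ.mulVec t = (Xᵀ * X).mulVec e := by
    have ht' : t = X.mulVec e + (X.mulVec βstar - y) := funext hres
    rw [ht', Matrix.mulVec_add, hnormal, add_zero, Matrix.mulVec_mulVec]
  have hAkey : ∀ k, ∑ i, a i k = A k := by
    intro k
    show ∑ i, t i * X i k = A k
    have h2 : Xᵀ.mulVec t k = ∑ i, t i * X i k := by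
      simp only [Matrix.mulVec, dotProduct, Matrix.transpose_apply]
      exact Finset.sum_congr rfl fun i _ => mul_comm _ _
    rw [← h2, hXt]
  -- the worker-sum identity
  have hdcast : ∀ i : Fin m, ((Finset.univ.filter (fun j => i ∈ S j)).card : ℝ) = (d i : ℝ) :=
    fun i => by exact_mod_cast hdeg i
  have hW : ∀ k, (1 - p) * ∑ j, w j k = A k := by
    intro k
    have h1 : ∑ j, w j k = ∑ i, (d i : ℝ) * (c i * a i k) := by
      calc ∑ j, w j k = ∑ j, ∑ i ∈ S j, c i * a i k := rfl
        _ = ∑ i, ((Finset.univ.filter (fun j => i ∈ S j)).card : ℝ) * (c i * a i k) :=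
            sum_workers S (fun i => c i * a i k)
        _ = ∑ i, (d i : ℝ) * (c i * a i k) :=
            Finset.sum_congr rfl fun i _ => by rw [hdcast i]
    rw [h1, Finset.mul_sum]
    calc ∑ i, (1 - p) * ((d i : ℝ) * (c i * a i k))
        = ∑ i, a i k := Finset.sum_congr rfl fun i _ => by
          simp only [hcdef]
          exact coeff_W _ _ _ (hdne i) hpne
      _ = A k := hAkey k
  -- pointwise rewriting of the update
  have hstep : ∀ ω k, βplus ω k - βstar k = e k - γ * ∑ j, B j ω * w j k := by
    intro ω k
    have h0 : βplus ω k = β k - γ * ∑ i, (Z i ω / ((d i : ℝ) * (1 - p))) * (t i * X i k) := by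
      rw [hβplus ω]
      simp only [Pi.sub_apply, Pi.smul_apply, Finset.sum_apply, smul_eq_mul]
      rfl
    have hsum : ∑ i, (Z i ω / ((d i : ℝ) * (1 - p))) * (t i * X i k)
        = ∑ j, B j ω * w j k := by
      calc ∑ i, (Z i ω / ((d i : ℝ) * (1 - p))) * (t i * X i k)
          = ∑ i, ∑ j, (if i ∈ S j then B j ω * (c i * a i k) else 0) := by
            refine Finset.sum_congr rfl fun i _ => ?_
            rw [hZ i ω, div_eq_mul_inv, Finset.sum_mul, Finset.sum_mul]
            refine Finset.sum_congr rfl fun j _ => ?_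
            by_cases hmem : i ∈ S j
            · simp only [if_pos hmem, hcdef, hadef]
              ring
            · simp [hmem]
        _ = ∑ j, ∑ i, (if i ∈ S j then B j ω * (c i * a i k) else 0) := Finset.sum_comm
        _ = ∑ j, B j ω * w j k := by
            refine Finset.sum_congr rfl fun j _ => ?_
            rw [Finset.sum_ite_mem, Finset.univ_inter]
            exact (Finset.mul_sum _ _ _).symm
    rw [h0, hsum]
    show β k - γ * (∑ j, B j ω * w j k) - βstar k = β k - βstar k - γ * (∑ j, B j ω * w j k)
    ring
  -- coefficients of the quadratic expansion
  set L : Fin n → ℝ := fun j => (-2 * γ) * ∑ k, e k * w j k with hLdef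
  set Qm : Fin n → Fin n → ℝ := fun j j' => γ ^ 2 * ∑ k, w j k * w j' k with hQdef
  have hg : (fun ω => ∑ k, (βplus ω k - βstar k) ^ 2)
      = fun ω => (∑ k, e k ^ 2) + (∑ j, L j * B j ω)
          + ∑ j, ∑ j', Qm j j' * (B j ω * B j' ω) := by
    funext ω
    calc ∑ k, (βplus ω k - βstar k) ^ 2
        = ∑ k, (e k - γ * ∑ j, B j ω * w j k) ^ 2 :=
          Finset.sum_congr rfl fun k _ => by rw [hstep ω k]
      _ = (∑ k, e k ^ 2) + (∑ j, ((-2 * γ) * ∑ k, e k * w j k) * B j ω)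
          + ∑ j, ∑ j', ((γ ^ 2 * ∑ k, w j k * w j' k) * (B j ω * B j' ω)) :=
          sum_expand_sq e γ (fun j => B j ω) w
      _ = _ := by
          simp only [hLdef, hQdef]
  -- integrability and moments
  have IB : ∀ j, Integrable (B j) (ℙ : Measure Ω) := fun j => int01 (hBmeas j) (hB01 j)
  have IBB : ∀ j j', Integrable (fun ω => B j ω * B j' ω) (ℙ : Measure Ω) := fun j j' =>
    int01 ((hBmeas j).mul (hBmeas j')) (fun ω => by
      rcases hB01 j ω with h | h <;> rcases hB01 j' ω with h' | h' <;> simp [h, h'])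
  have EB : ∀ j, ∫ ω, B j ω = 1 - p := fun j =>
    int_eq01 (hBmeas j) (hB01 j) (by linarith) (hBp j)
  have EBB : ∀ j j', ∫ ω, B j ω * B j' ω = if j = j' then 1 - p else (1 - p) ^ 2 := by
    intro j j'
    by_cases h : j = j'
    · subst h
      rw [if_pos rfl]
      have hBB : (fun ω => B j ω * B j ω) = B j := funext fun ω => by
        rcases hB01 j ω with h | h <;> simp [h]
      rw [hBB]
      exact EB j
    · rw [if_neg h]
      have hind := IndepFun.integral_fun_mul_eq_mul_integral (hBindep.indepFun h)
        (hBmeas j).aestronglyMeasurable (hBmeas j').aestronglyMeasurable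
      calc ∫ ω, B j ω * B j' ω = (∫ ω, B j ω) * ∫ ω, B j' ω := hind
        _ = (1 - p) ^ 2 := by rw [EB j, EB j']; ring
  have I1 : Integrable (fun ω => ∑ j, L j * B j ω) (ℙ : Measure Ω) :=
    integrable_finset_sum _ fun j _ => (IB j).const_mul (L j)
  have I2 : Integrable (fun ω => ∑ j, ∑ j', Qm j j' * (B j ω * B j' ω)) (ℙ : Measure Ω) :=
    integrable_finset_sum _ fun j _ => integrable_finset_sum _ fun j' _ => (IBB j j').const_mul _
  have hT : ∫ ω, ∑ k, (βplus ω k - βstar k) ^ 2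
      = (∑ k, e k ^ 2) + (∑ j, L j * (1 - p))
        + ∑ j, ∑ j', Qm j j' * (if j = j' then 1 - p else (1 - p) ^ 2) := by
    rw [hg]
    have Ic : Integrable (fun _ : Ω => ∑ k, e k ^ 2) (ℙ : Measure Ω) := integrable_const _
    have I01 : Integrable (fun ω => (∑ k, e k ^ 2) + ∑ j, L j * B j ω) (ℙ : Measure Ω) := Ic.add I1
    rw [integral_add I01 I2, integral_add Ic I1, integral_const]
    simp only [measureReal_def, measure_univ, ENNReal.toReal_one, one_smul]
    congr 1
    · congr 1
      rw [integral_finset_sum _ fun j _ => (IB j).const_mul (L j)]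
      exact Finset.sum_congr rfl fun j _ => by rw [integral_const_mul, EB j]
    · rw [integral_finset_sum _ fun j _ =>
        integrable_finset_sum _ fun j' _ => (IBB j j').const_mul _]
      refine Finset.sum_congr rfl fun j _ => ?_
      rw [integral_finset_sum _ fun j' _ => (IBB j j').const_mul _]
      exact Finset.sum_congr rfl fun j' _ => by rw [integral_const_mul, EBB j j']
  -- abbreviations for scalar quantities
  set SA : ℝ := ∑ k, A k ^ 2 with hSAdef
  set Sw : ℝ := ∑ j, ∑ k, w j k * w j k with hSwdef
  set Sa : Fin m → ℝ := fun i => ∑ k, a i k * a i k with hSadef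
  set D : ℝ := ∑ i, Sa i * ((d i : ℝ)⁻¹ - (n:ℝ)⁻¹) with hDdef
  set U : ℝ := ∑ i, (X.mulVec e i) ^ 2 with hUdef
  -- the linear term
  have hterm1 : ∑ j, L j * (1 - p) = (-2 * γ) * ∑ k, e k * A k := by
    have h1 : ∀ j, L j * (1 - p) = (-2 * γ) * ∑ k, e k * ((1 - p) * w j k) := by
      intro j
      simp only [hLdef]
      rw [Finset.mul_sum, Finset.mul_sum, Finset.sum_mul]
      exact Finset.sum_congr rfl fun k _ => by ring
    calc ∑ j, L j * (1 - p)
        = ∑ j, (-2 * γ) * ∑ k, e k * ((1 - p) * w j k) := Finset.sum_congr rfl fun j _ => h1 j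
      _ = (-2 * γ) * ∑ j, ∑ k, e k * ((1 - p) * w j k) := (Finset.mul_sum _ _ _).symm
      _ = (-2 * γ) * ∑ k, ∑ j, e k * ((1 - p) * w j k) := by rw [Finset.sum_comm]
      _ = (-2 * γ) * ∑ k, e k * A k := by
          refine congrArg _ (Finset.sum_congr rfl fun k _ => ?_)
          rw [← Finset.mul_sum, ← Finset.mul_sum, hW k]
  -- the quadratic term
  have hsplit : ∀ j j', Qm j j' * (if j = j' then 1 - p else (1 - p) ^ 2)
      = Qm j j' * (1 - p) ^ 2 + (if j = j' then Qm j j' * ((1 - p) - (1 - p) ^ 2) else 0) := by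
    intro j j'
    by_cases h : j = j' <;> simp [h] <;> ring
  have hp1 : ∀ j j', Qm j j' * (1 - p) ^ 2
      = γ ^ 2 * ∑ k, ((1 - p) * w j k) * ((1 - p) * w j' k) := by
    intro j j'
    have h2 : ∑ k, ((1 - p) * w j k) * ((1 - p) * w j' k)
        = (1 - p) ^ 2 * ∑ k, w j k * w j' k := by
      rw [Finset.mul_sum]
      exact Finset.sum_congr rfl fun k _ => by ring
    rw [h2]
    simp only [hQdef]
    ring
  have hpart1 : ∑ j, ∑ j', Qm j j' * (1 - p) ^ 2 = γ ^ 2 * SA := by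
    calc ∑ j, ∑ j', Qm j j' * (1 - p) ^ 2
        = γ ^ 2 * ∑ j, ∑ j', ∑ k, ((1 - p) * w j k) * ((1 - p) * w j' k) := by
          rw [Finset.mul_sum]
          refine Finset.sum_congr rfl fun j _ => ?_
          rw [Finset.mul_sum]
          exact Finset.sum_congr rfl fun j' _ => hp1 j j'
      _ = γ ^ 2 * ∑ k, (∑ j, (1 - p) * w j k) ^ 2 := by
          rw [sum_ip_regroup (fun j k => (1 - p) * w j k)]
      _ = γ ^ 2 * SA := by
          rw [hSAdef]
          refine congrArg _ (Finset.sum_congr rfl fun k _ => ?_)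
          rw [← Finset.mul_sum, hW k]
  have hpart2 : ∑ j, ∑ j', (if j = j' then Qm j j' * ((1 - p) - (1 - p) ^ 2) else 0)
      = γ ^ 2 * (p * (1 - p)) * Sw := by
    have h1 : ∀ j : Fin n, ∑ j', (if j = j' then Qm j j' * ((1 - p) - (1 - p) ^ 2) else 0)
        = Qm j j * ((1 - p) - (1 - p) ^ 2) := by
      intro j
      rw [Finset.sum_ite_eq Finset.univ j (fun j' => Qm j j' * ((1 - p) - (1 - p) ^ 2))]
      simp
    calc ∑ j, ∑ j', (if j = j' then Qm j j' * ((1 - p) - (1 - p) ^ 2) else 0)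
        = ∑ j, Qm j j * ((1 - p) - (1 - p) ^ 2) := Finset.sum_congr rfl fun j _ => h1 j
      _ = ∑ j, γ ^ 2 * (p * (1 - p)) * (∑ k, w j k * w j k) :=
          Finset.sum_congr rfl fun j _ => by simp only [hQdef]; ring
      _ = γ ^ 2 * (p * (1 - p)) * Sw := by rw [hSwdef, Finset.mul_sum]
  have hterm2 : ∑ j, ∑ j', Qm j j' * (if j = j' then 1 - p else (1 - p) ^ 2)
      = γ ^ 2 * SA + γ ^ 2 * (p * (1 - p)) * Sw := by
    calc ∑ j, ∑ j', Qm j j' * (if j = j' then 1 - p else (1 - p) ^ 2)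
        = ∑ j, ∑ j', (Qm j j' * (1 - p) ^ 2
            + (if j = j' then Qm j j' * ((1 - p) - (1 - p) ^ 2) else 0)) :=
          Finset.sum_congr rfl fun j _ => Finset.sum_congr rfl fun j' _ => hsplit j j'
      _ = (∑ j, ∑ j', Qm j j' * (1 - p) ^ 2)
          + ∑ j, ∑ j', (if j = j' then Qm j j' * ((1 - p) - (1 - p) ^ 2) else 0) := by
          simp only [Finset.sum_add_distrib]
      _ = γ ^ 2 * SA + γ ^ 2 * (p * (1 - p)) * Sw := by rw [hpart1, hpart2]
  have hexp : ∑ k, (e k - γ * A k) ^ 2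
      = (∑ k, e k ^ 2) + (-2 * γ) * (∑ k, e k * A k) + γ ^ 2 * SA := by
    rw [hSAdef]
    calc ∑ k, (e k - γ * A k) ^ 2
        = ∑ k, (e k ^ 2 + (-2 * γ) * (e k * A k) + γ ^ 2 * A k ^ 2) :=
          Finset.sum_congr rfl fun k _ => by ring
      _ = (∑ k, e k ^ 2) + (-2 * γ) * (∑ k, e k * A k) + γ ^ 2 * ∑ k, A k ^ 2 := by
          rw [Finset.sum_add_distrib, Finset.sum_add_distrib, ← Finset.mul_sum, ← Finset.mul_sum]
  have hT2 : ∫ ω, ∑ k, (βplus ω k - βstar k) ^ 2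
      = (∑ k, (e k - γ * A k) ^ 2) + γ ^ 2 * (p * (1 - p)) * Sw := by
    rw [hT, hterm1, hterm2, hexp]
    ring
  -- the pairwise-balance computation of Sw
  have hN : ∀ i i' : Fin m, i ≠ i' →
      ((Finset.univ.filter (fun j => i ∈ S j ∧ i' ∈ S j)).card : ℝ) = (d i : ℝ) * (d i' : ℝ) / n := by
    intro i i' hne'
    have hcast : ((Finset.univ.filter (fun j => i ∈ S j ∧ i' ∈ S j)).card : ℝ) * (n : ℝ)
        = (d i : ℝ) * (d i' : ℝ) := by exact_mod_cast hpair i i' hne'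
    rw [eq_div_iff hnne]
    exact hcast
  have hNii : ∀ i : Fin m,
      ((Finset.univ.filter (fun j => i ∈ S j ∧ i ∈ S j)).card : ℝ) = (d i : ℝ) := by
    intro i
    have hfe : (Finset.univ.filter (fun j => i ∈ S j ∧ i ∈ S j))
        = Finset.univ.filter (fun j => i ∈ S j) := by
      ext j
      simp [Finset.mem_filter]
    rw [hfe]
    exact hdcast i
  have hSw1 : Sw = ∑ i, ∑ i',
      ((Finset.univ.filter (fun j => i ∈ S j ∧ i' ∈ S j)).card : ℝ)
        * ((c i * c i') * ∑ k, a i k * a i' k) := by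
    rw [hSwdef]
    have h1 : ∀ j, ∑ k, w j k * w j k
        = ∑ i ∈ S j, ∑ i' ∈ S j, (c i * c i') * ∑ k, a i k * a i' k := by
      intro j
      simp only [hwdef]
      calc ∑ k, (∑ i ∈ S j, c i * a i k) * (∑ i' ∈ S j, c i' * a i' k)
          = ∑ k, ∑ i ∈ S j, ∑ i' ∈ S j, (c i * a i k) * (c i' * a i' k) :=
            Finset.sum_congr rfl fun k _ => by rw [Finset.sum_mul_sum]
        _ = ∑ i ∈ S j, ∑ k, ∑ i' ∈ S j, (c i * a i k) * (c i' * a i' k) := Finset.sum_comm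
        _ = ∑ i ∈ S j, ∑ i' ∈ S j, ∑ k, (c i * a i k) * (c i' * a i' k) :=
            Finset.sum_congr rfl fun i _ => Finset.sum_comm
        _ = ∑ i ∈ S j, ∑ i' ∈ S j, (c i * c i') * ∑ k, a i k * a i' k :=
            Finset.sum_congr rfl fun i _ => Finset.sum_congr rfl fun i' _ => by
              rw [Finset.mul_sum]
              exact Finset.sum_congr rfl fun k _ => by ring
    simp_rw [h1]
    exact sum_workers_pair S (fun i i' => (c i * c i') * ∑ k, a i k * a i' k)
  have hoff : ∀ i i' : Fin m, ((d i : ℝ) * (d i' : ℝ) / n) * ((c i * c i') * ∑ k, a i k * a i' k)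
      = (n:ℝ)⁻¹ * ((1 - p) ^ 2)⁻¹ * ∑ k, a i k * a i' k := by
    intro i i'
    simp only [hcdef]
    exact coeff_off _ _ _ _ _ (hdne i) (hdne i') hnne hpne
  have hdiag : ∀ i : Fin m, (d i : ℝ) * ((c i * c i) * ∑ k, a i k * a i k)
      = (d i : ℝ)⁻¹ * ((1 - p) ^ 2)⁻¹ * Sa i := by
    intro i
    have hSai : Sa i = ∑ k, a i k * a i k := rfl
    rw [hSai]
    simp only [hcdef]
    exact coeff_diag _ _ _ (hdne i) hpne
  have hSw2 : Sw = (∑ i, ∑ i' ∈ Finset.univ.erase i,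
        (n:ℝ)⁻¹ * ((1 - p) ^ 2)⁻¹ * ∑ k, a i k * a i' k)
      + ∑ i, (d i : ℝ)⁻¹ * ((1 - p) ^ 2)⁻¹ * Sa i := by
    rw [hSw1, ← Finset.sum_add_distrib]
    refine Finset.sum_congr rfl fun i _ => ?_
    rw [← Finset.sum_erase_add Finset.univ _ (Finset.mem_univ i)]
    congr 1
    · refine Finset.sum_congr rfl fun i' hi' => ?_
      have hne' : i ≠ i' := fun hEq => (Finset.ne_of_mem_erase hi') hEq.symm
      rw [hN i i' hne', hoff i i']
    · rw [hNii i, hdiag i]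
  have hoffsum : ∑ i, ∑ i' ∈ Finset.univ.erase i, (∑ k, a i k * a i' k)
      = SA - ∑ i, Sa i := by
    have h1 : ∀ i : Fin m, ∑ i' ∈ Finset.univ.erase i, (∑ k, a i k * a i' k)
        = (∑ i', ∑ k, a i k * a i' k) - Sa i := by
      intro i
      have h2 := Finset.sum_erase_add Finset.univ (fun i' => ∑ k, a i k * a i' k)
        (Finset.mem_univ i)
      have h3 : Sa i = ∑ k, a i k * a i k := rfl
      linarith [h2]
    calc ∑ i, ∑ i' ∈ Finset.univ.erase i, (∑ k, a i k * a i' k)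
        = ∑ i, ((∑ i', ∑ k, a i k * a i' k) - Sa i) := Finset.sum_congr rfl fun i _ => h1 i
      _ = (∑ i, ∑ i', ∑ k, a i k * a i' k) - ∑ i, Sa i := Finset.sum_sub_distrib _ _
      _ = SA - ∑ i, Sa i := by
          rw [sum_ip_regroup a, hSAdef]
          refine congrArg₂ (· - ·) (Finset.sum_congr rfl fun k _ => ?_) rfl
          rw [hAkey k]
  have hstar : (1 - p) ^ 2 * Sw = (n:ℝ)⁻¹ * SA + D := by
    have hpp : ((1 : ℝ) - p) ^ 2 ≠ 0 := pow_ne_zero _ hpne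
    have hoffc : ∑ i, ∑ i' ∈ Finset.univ.erase i,
        (n:ℝ)⁻¹ * ((1 - p) ^ 2)⁻¹ * ∑ k, a i k * a i' k
        = (n:ℝ)⁻¹ * ((1 - p) ^ 2)⁻¹ * (SA - ∑ i, Sa i) := by
      rw [← hoffsum, Finset.mul_sum]
      exact Finset.sum_congr rfl fun i _ => by rw [Finset.mul_sum]
    rw [hSw2, hoffc, mul_add]
    have hc1 : (1 - p) ^ 2 * ((n:ℝ)⁻¹ * ((1 - p) ^ 2)⁻¹ * (SA - ∑ i, Sa i))
        = (n:ℝ)⁻¹ * (SA - ∑ i, Sa i) := cancel₁ _ _ _ hpp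
    have hc2 : (1 - p) ^ 2 * ∑ i, (d i : ℝ)⁻¹ * ((1 - p) ^ 2)⁻¹ * Sa i
        = ∑ i, (d i : ℝ)⁻¹ * Sa i := by
      rw [Finset.mul_sum]
      refine Finset.sum_congr rfl fun i _ => ?_
      exact cancel₁ _ _ _ hpp
    rw [hc1, hc2, hDdef]
    have hc3 : ∑ i, Sa i * ((d i : ℝ)⁻¹ - (n:ℝ)⁻¹)
        = (∑ i, (d i : ℝ)⁻¹ * Sa i) - (n:ℝ)⁻¹ * ∑ i, Sa i := by
      rw [Finset.mul_sum, ← Finset.sum_sub_distrib]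
      exact Finset.sum_congr rfl fun i _ => by ring
    rw [hc3]
    ring
  -- positivity of σ
  have hσpos : ∀ _i : Fin m, 0 < σ := by
    intro i
    have h1 : (0:ℝ) < σ * ∑ k, X i k ^ 2 := by rw [← hw i]; exact hdR i
    have h2 : (0:ℝ) ≤ ∑ k, X i k ^ 2 := by positivity
    by_contra hcon
    push_neg at hcon
    have h3 : σ * (∑ k, X i k ^ 2) ≤ 0 * (∑ k, X i k ^ 2) :=
      mul_le_mul_of_nonneg_right hcon h2
    rw [zero_mul] at h3
    exact lt_irrefl (0:ℝ) (lt_of_lt_of_le h1 h3)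
  have hσnn : 0 ≤ σ := by
    rcases Nat.eq_zero_or_pos m with hm | hm
    · have hσ0 : σ = 0 := by
        subst hm
        rw [hσ, hdbar]
        simp
      rw [hσ0]
    · exact le_of_lt (hσpos ⟨0, hm⟩)
  -- per-point bound
  have hperi : ∀ i : Fin m, Sa i * ((d i : ℝ)⁻¹ - (n:ℝ)⁻¹)
      ≤ 2 / σ * ((X.mulVec e i) ^ 2 + r i ^ 2) := by
    intro i
    have hσp := hσpos i
    have hσne := ne_of_gt hσp
    have hsx : (0:ℝ) < ∑ k, X i k ^ 2 := by
      rcases lt_or_ge 0 (∑ k, X i k ^ 2) with h | h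
      · exact h
      · exfalso
        have h1 : (0:ℝ) < σ * ∑ k, X i k ^ 2 := by rw [← hw i]; exact hdR i
        nlinarith
    have hSa_eq : Sa i = t i ^ 2 * ∑ k, X i k ^ 2 := by
      simp only [hSadef, hadef]
      rw [Finset.mul_sum]
      exact Finset.sum_congr rfl fun k _ => by ring
    have hSann : 0 ≤ Sa i := by rw [hSa_eq]; positivity
    have h1 : Sa i * ((d i : ℝ)⁻¹ - (n:ℝ)⁻¹) ≤ Sa i * (d i : ℝ)⁻¹ := by
      have hni : (0:ℝ) ≤ (n:ℝ)⁻¹ := by positivity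
      nlinarith
    have h2 : Sa i * (d i : ℝ)⁻¹ = t i ^ 2 / σ := by
      rw [hSa_eq, hw i]
      exact cancel₃ _ _ _ (ne_of_gt hsx) hσne
    have h3 : t i ^ 2 ≤ 2 * (X.mulVec e i) ^ 2 + 2 * r i ^ 2 := by
      rw [hres i]
      nlinarith [sq_nonneg (X.mulVec e i - r i)]
    have h4 : t i ^ 2 / σ ≤ (2 * (X.mulVec e i) ^ 2 + 2 * r i ^ 2) / σ :=
      (div_le_div_iff_of_pos_right hσp).mpr h3
    calc Sa i * ((d i : ℝ)⁻¹ - (n:ℝ)⁻¹) ≤ Sa i * (d i : ℝ)⁻¹ := h1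
      _ = t i ^ 2 / σ := h2
      _ ≤ (2 * (X.mulVec e i) ^ 2 + 2 * r i ^ 2) / σ := h4
      _ = 2 / σ * ((X.mulVec e i) ^ 2 + r i ^ 2) := by ring
  have hDbound : D ≤ 2 / σ * (U + R2) := by
    calc D ≤ ∑ i, 2 / σ * ((X.mulVec e i) ^ 2 + r i ^ 2) := by
          rw [hDdef]
          exact Finset.sum_le_sum fun i _ => hperi i
      _ = 2 / σ * (U + R2) := by
          rw [hUdef, hR2e, ← Finset.sum_add_distrib, Finset.mul_sum]
  -- spectral norm bounds
  have hUb : U ≤ K2 * E2 := by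
    calc U = ∑ i, (X.mulVec e i) ^ 2 := hUdef
      _ = ∑ k, e k * ((Xᵀ * X).mulVec e) k := mulVec_sq_eq X e
      _ ≤ specNorm (Xᵀ * X) * ∑ k, e k ^ 2 := specNorm_quad_le _ e
      _ = K2 * E2 := by rw [hK2, hE2e]
  have hSAb : SA ≤ K2 ^ 2 * E2 := by
    have h0 : SA = ∑ k, (((Xᵀ * X)).mulVec e k) ^ 2 := hSAdef
    calc SA = ∑ k, (((Xᵀ * X)).mulVec e k) ^ 2 := h0
      _ ≤ specNorm (Xᵀ * X) ^ 2 * ∑ k, e k ^ 2 := specNorm_mulVec_sq_le _ e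
      _ = K2 ^ 2 * E2 := by rw [hK2, hE2e]
  have hMv : ∀ k, ((1 : Matrix (Fin l) (Fin l) ℝ) - γ • (Xᵀ * X)).mulVec e k
      = e k - γ * A k := by
    intro k
    rw [Matrix.sub_mulVec, Matrix.one_mulVec, Matrix.smul_mulVec]
    simp only [Pi.sub_apply, Pi.smul_apply, smul_eq_mul]
    rfl
  have hb1 : ∑ k, (e k - γ * A k) ^ 2 ≤ K1 ^ 2 * E2 := by
    calc ∑ k, (e k - γ * A k) ^ 2
        = ∑ k, (((1 : Matrix (Fin l) (Fin l) ℝ) - γ • (Xᵀ * X)).mulVec e k) ^ 2 :=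
          Finset.sum_congr rfl fun k _ => by rw [hMv k]
      _ ≤ specNorm ((1 : Matrix (Fin l) (Fin l) ℝ) - γ • (Xᵀ * X)) ^ 2 * ∑ k, e k ^ 2 :=
          specNorm_mulVec_sq_le _ e
      _ = K1 ^ 2 * E2 := by rw [hK1, hE2e]
  -- final assembly
  set cB : ℝ := p * γ ^ 2 * (1 - p)⁻¹ * (n:ℝ)⁻¹ with hcB
  set cD : ℝ := p * γ ^ 2 * (1 - p)⁻¹ with hcD
  have h1pinv : (0:ℝ) ≤ (1 - p)⁻¹ := inv_nonneg.mpr (le_of_lt hp')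
  have hninv : (0:ℝ) ≤ (n:ℝ)⁻¹ := by positivity
  have hcBnn : 0 ≤ cB := by
    rw [hcB]
    exact mul_nonneg (mul_nonneg (mul_nonneg hp0 (sq_nonneg γ)) h1pinv) hninv
  have hcDnn : 0 ≤ cD := by
    rw [hcD]
    exact mul_nonneg (mul_nonneg hp0 (sq_nonneg γ)) h1pinv
  have hT3 : ∫ ω, ∑ k, (βplus ω k - βstar k) ^ 2
      = (∑ k, (e k - γ * A k) ^ 2) + cB * SA + cD * D := by
    rw [hT2]
    have h5 : γ ^ 2 * (p * (1 - p)) * Sw = cD * ((1 - p) ^ 2 * Sw) := by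
      rw [hcD]
      exact h5aux _ _ _ _ hpne
    rw [h5, hstar, hcB, hcD]
    ring
  have hb2 : cB * SA ≤ cB * (K2 ^ 2 * E2) := mul_le_mul_of_nonneg_left hSAb hcBnn
  have hb3 : cD * D ≤ cD * (2 / σ * (K2 * E2 + R2)) := by
    refine mul_le_mul_of_nonneg_left ?_ hcDnn
    calc D ≤ 2 / σ * (U + R2) := hDbound
      _ ≤ 2 / σ * (K2 * E2 + R2) := by
          refine mul_le_mul_of_nonneg_left ?_ (div_nonneg (by norm_num) hσnn)
          linarith [hUb]
  calc ∫ ω, ∑ k, (βplus ω k - βstar k) ^ 2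
      = (∑ k, (e k - γ * A k) ^ 2) + cB * SA + cD * D := hT3
    _ ≤ K1 ^ 2 * E2 + cB * (K2 ^ 2 * E2) + cD * (2 / σ * (K2 * E2 + R2)) :=
        add_le_add (add_le_add hb1 hb2) hb3
    _ = (K1 ^ 2 + p / ((1 - p) * n) * γ ^ 2 * K2 ^ 2
          + 2 * p / ((1 - p) * σ) * γ ^ 2 * K2) * E2
        + 2 * p / ((1 - p) * σ) * γ ^ 2 * R2 := by
        rw [hcB, hcD]
        exact finalring K1 K2 E2 R2 p γ (1 - p) (n:ℝ) σ
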